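/- Let a, b be positive real numbers with a/b irrational. Then for all positive integers n and p, one has n + ⌊n·a/b⌋ ≠ p + ⌊p·b/a⌋. -/

import Mathlib

theorem tamura_two_disjoint (a b : ℝ) (ha : 0 < a) (hb : 0 < b)
    (hirr : Irrational (a / b)) (n p : ℕ) (hn : 0 < n) (hp : 0 < p) :
    (n : ℤ) + ⌊(n : ℝ) * (a / b)⌋ ≠ (p : ℤ) + ⌊(p : ℝ) * (b / a)⌋ := by
  set r : ℝ := 1 + a / b with hr
  set s : ℝ := 1 + b / a with hs
  have ht : (0:ℝ) < a / b := div_pos ha hb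
  have hrs : r.HolderConjugate s := by
    refine Real.holderConjugate_iff.mpr ⟨?_, ?_⟩
    · rw [hr]; linarith
    · rw [hr, hs]
      field_simp
      ring
  have hsirr : Irrational s := by
    have : Irrational (b / a) := by
      have := hirr.inv
      rwa [inv_div] at this
    simpa [hs] using this.intCast_add 1
  intro h
  have e1 : beattySeq r n = (n : ℤ) + ⌊(n : ℝ) * (a / b)⌋ := by
    rw [beattySeq, hr]
    rw [show ((n:ℤ):ℝ) * (1 + a/b) = (n:ℤ) + (n:ℝ) * (a/b) by push_cast; ring,
      Int.floor_intCast_add]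
  have e2 : beattySeq s p = (p : ℤ) + ⌊(p : ℝ) * (b / a)⌋ := by
    rw [beattySeq, hs]
    rw [show ((p:ℤ):ℝ) * (1 + b/a) = (p:ℤ) + (p:ℝ) * (b/a) by push_cast; ring,
      Int.floor_intCast_add]
  set j : ℤ := (n : ℤ) + ⌊(n : ℝ) * (a / b)⌋ with hj
  have h1 : j ∈ {x | ∃ k, beattySeq r k = x} := ⟨n, e1⟩
  have h2 : j ∈ {x | ∃ k > 0, beattySeq s k = x} :=
    ⟨p, Int.natCast_pos.2 hp, by rw [e2, ← h]⟩
  rw [← hsirr.beattySeq'_pos_eq] at h2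
  obtain ⟨k, -, hk⟩ := h2
  have h2' : j ∈ {x | ∃ k, beattySeq' s k = x} := ⟨k, hk⟩
  rw [← compl_beattySeq hrs] at h2'
  exact h2' h1
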